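/- (Chainswapping.) Let k ≥ 1, let φ be a Boolean function on V = {0,...,k}, and let ν ≠ ν' be two valuations such that there is a simple path ν = ν_0 − ν_1 − ... − ν_n − ν_{n+1} = ν' from ν to ν' in the hypercube graph G_V, with n ≥ 0 and ν_i ∉ sat(φ) for all 1 ≤ i ≤ n. If (−1)^{|ν|} = (−1)^{|ν'|} and ν ∈ sat(φ) and ν' ∉ sat(φ), then the Boolean function φ' defined by sat(φ') = (sat(φ) \ {ν}) ∪ {ν'} satisfies φ →±* φ' (in particular φ ≃ φ'). -/

import Mathlib

open scoped Classical

/-- Flip the membership of variable `l` in valuation `ν`. -/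
def flipV {k : ℕ} (ν : Finset (Fin (k + 1))) (l : Fin (k + 1)) : Finset (Fin (k + 1)) :=
  if l ∈ ν then ν.erase l else insert l ν

lemma flipV_flipV {k : ℕ} (ν : Finset (Fin (k + 1))) (l : Fin (k + 1)) :
    flipV (flipV ν l) l = ν := by
  unfold flipV
  by_cases h : l ∈ ν
  · simp [h, Finset.insert_erase h]
  · simp [h, Finset.erase_insert h]

lemma flipV_ne {k : ℕ} (ν : Finset (Fin (k + 1))) (l : Fin (k + 1)) :
    flipV ν l ≠ ν := by
  unfold flipV
  by_cases h : l ∈ ν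
  · simp only [h, if_true]
    intro he
    exact (Finset.notMem_erase l ν) (he.symm ▸ h)
  · simp only [h, if_false]
    intro he
    exact h (he ▸ Finset.mem_insert_self l ν)

/-- `φ →+ φ'`: there are `ν, l` with `ν ∉ sat(φ)`, `ν^(l) ∉ sat(φ)` and
`sat(φ') = sat(φ) ∪ {ν, ν^(l)}`. -/
def StepPlus (k : ℕ) (φ φ' : Finset (Fin (k + 1)) → Bool) : Prop :=
  ∃ (ν : Finset (Fin (k + 1))) (l : Fin (k + 1)),
    φ ν = false ∧ φ (flipV ν l) = false ∧
    ∀ μ, (φ' μ = true ↔ φ μ = true ∨ μ = ν ∨ μ = flipV ν l)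

/-- `φ →− φ'`: remove two adjacent satisfying valuations. -/
def StepMinus (k : ℕ) (φ φ' : Finset (Fin (k + 1)) → Bool) : Prop :=
  StepPlus k φ' φ

/-- `φ →± φ'`. -/
def StepPM (k : ℕ) (φ φ' : Finset (Fin (k + 1)) → Bool) : Prop :=
  StepPlus k φ φ' ∨ StepMinus k φ φ'

/-- The relation `≃` (equivalently `→±*`): the reflexive transitive closure of `→±`. -/
def EquivPM (k : ℕ) (φ φ' : Finset (Fin (k + 1)) → Bool) : Prop :=
  Relation.ReflTransGen (StepPM k) φ φ'

/-- The hypercube graph `G_V` on the valuations of `V = {0,...,k}`: there is an edge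
between `ν` and `ν^(l)` for every valuation `ν` and variable `l`. -/
def hypercube (k : ℕ) : SimpleGraph (Finset (Fin (k + 1))) where
  Adj ν μ := ∃ l, μ = flipV ν l
  symm := by
    constructor
    rintro ν μ ⟨l, rfl⟩
    exact ⟨l, (flipV_flipV ν l).symm⟩
  loopless := by
    constructor
    rintro ν ⟨l, h⟩
    exact flipV_ne ν l h.symm

lemma parity_flip {k : ℕ} (ν : Finset (Fin (k + 1))) (l : Fin (k + 1)) :
    ((-1 : ℤ) ^ (flipV ν l).card) = -(-1 : ℤ) ^ ν.card := by
  unfold flipV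
  by_cases h : l ∈ ν
  · rw [if_pos h, Finset.card_erase_of_mem h]
    obtain ⟨m, hm⟩ := Nat.exists_eq_add_of_le (Finset.one_le_card.mpr ⟨l, h⟩)
    rw [hm]
    simp [pow_succ, Nat.add_comm]
  · rw [if_neg h, Finset.card_insert_of_notMem h, pow_succ]
    ring

lemma neg_one_pow_ne {m : ℕ} : ((-1 : ℤ) ^ m) ≠ -(-1 : ℤ) ^ m := by
  intro h
  have h0 : ((-1 : ℤ) ^ m) ≠ 0 := pow_ne_zero _ (by norm_num)
  have : ((-1 : ℤ) ^ m) = 0 := by linarith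
  exact h0 this

lemma swap_two (k : ℕ) (φ : Finset (Fin (k + 1)) → Bool)
    (ν ν₁ ν₂ : Finset (Fin (k + 1))) (l₁ l₂ : Fin (k + 1))
    (e1 : ν₁ = flipV ν l₁) (e2 : ν₂ = flipV ν₁ l₂)
    (hν : φ ν = true) (h1 : φ ν₁ = false) (h2 : φ ν₂ = false)
    (hne : ν ≠ ν₂) :
    Relation.ReflTransGen (StepPM k) φ
      (fun μ => decide ((φ μ = true ∧ μ ≠ ν) ∨ μ = ν₂)) := by
  have hν₁ν₂ : ν₁ ≠ ν₂ := fun h => flipV_ne ν₁ l₂ (by rw [← e2, h])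
  have hνν₁ : ν ≠ ν₁ := fun h => flipV_ne ν l₁ (by rw [← e1, h])
  have step1 : StepPlus k φ (fun μ => decide (φ μ = true ∨ μ = ν₁ ∨ μ = ν₂)) := by
    refine ⟨ν₁, l₂, h1, ?_, fun μ => ?_⟩
    · rw [← e2]; exact h2
    · rw [← e2]; simp
  have step2 : StepPlus k (fun μ => decide ((φ μ = true ∧ μ ≠ ν) ∨ μ = ν₂))
      (fun μ => decide (φ μ = true ∨ μ = ν₁ ∨ μ = ν₂)) := by
    refine ⟨ν, l₁, ?_, ?_, fun μ => ?_⟩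
    · simp [hne]
    · rw [← e1]
      simp only [decide_eq_false_iff_not]
      rintro (⟨hc, -⟩ | hc)
      · rw [h1] at hc; exact Bool.false_ne_true hc
      · exact hν₁ν₂ hc
    · rw [← e1]
      simp only [decide_eq_true_iff]
      constructor
      · rintro (h | h | h)
        · by_cases hμ : μ = ν
          · exact Or.inr (Or.inl hμ)
          · exact Or.inl (Or.inl ⟨h, hμ⟩)
        · exact Or.inr (Or.inr h)
        · exact Or.inl (Or.inr h)
      · rintro ((⟨h, -⟩ | h) | h | h)
        · exact Or.inl h
        · exact Or.inr (Or.inr h)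
        · exact Or.inl (h ▸ hν)
        · exact Or.inr (Or.inl h)
  have s1 : Relation.ReflTransGen (StepPM k) φ
      (fun μ => decide (φ μ = true ∨ μ = ν₁ ∨ μ = ν₂)) :=
    Relation.ReflTransGen.single (Or.inl step1)
  exact s1.tail (Or.inr step2)

lemma stmt8_aux (k : ℕ) : ∀ (n : ℕ) (φ : Finset (Fin (k + 1)) → Bool)
    (ν ν' : Finset (Fin (k + 1))) (p : (hypercube k).Walk ν ν'),
    p.length = n → ν ≠ ν' → p.IsPath →
    (∀ μ ∈ p.support, μ ≠ ν → μ ≠ ν' → φ μ = false) →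
    ((-1 : ℤ) ^ ν.card = (-1 : ℤ) ^ ν'.card) →
    φ ν = true → φ ν' = false →
    Relation.ReflTransGen (StepPM k) φ
      (fun μ => decide ((φ μ = true ∧ μ ≠ ν) ∨ μ = ν')) := by
  intro n
  induction n using Nat.strong_induction_on with
  | _ n ih =>
    intro φ ν ν' p hlen hne hpath hint hpar hν hν'
    cases p with
    | nil => exact absurd rfl hne
    | @cons _ b _ h₁ p₁ =>
      obtain ⟨l₁, hb⟩ := id h₁
      have hbν : b ≠ ν := by
        have hnd := hpath.support_nodup
        simp only [SimpleGraph.Walk.support_cons, List.nodup_cons] at hnd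
        intro hbe
        exact hnd.1 (hbe ▸ SimpleGraph.Walk.start_mem_support p₁)
      have hbν' : b ≠ ν' := by
        intro hbe
        rw [← hbe, hb, parity_flip] at hpar
        exact neg_one_pow_ne hpar
      have hφb : φ b = false := by
        apply hint b _ hbν hbν'
        simp [SimpleGraph.Walk.support_cons]
      cases p₁ with
      | nil => exact absurd rfl hbν'
      | @cons _ c _ h₂ q =>
        obtain ⟨l₂, hc⟩ := id h₂
        have hnodup := hpath.support_nodup
        simp only [SimpleGraph.Walk.support_cons, List.nodup_cons] at hnodup
        have hνq : ν ∉ q.support := fun hm => hnodup.1 (List.mem_cons_of_mem b hm)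
        have hcν : c ≠ ν := by
          intro hh
          exact hνq (hh ▸ SimpleGraph.Walk.start_mem_support q)
        by_cases hcase : c = ν'
        · exact hcase ▸ swap_two k φ ν b c l₁ l₂ hb hc hν hφb (hcase ▸ hν')
            (fun hh => hne (hh.trans hcase))
        · have hφc : φ c = false := by
            apply hint c _ hcν hcase
            simp [SimpleGraph.Walk.support_cons]
          have hst := swap_two k φ ν b c l₁ l₂ hb hc hν hφb hφc
            (fun hh => hcν hh.symm)
          have hpar' : ((-1 : ℤ) ^ c.card = (-1 : ℤ) ^ ν'.card) := by
            rw [hc, parity_flip, hb, parity_flip, neg_neg, hpar]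
          have hq : Relation.ReflTransGen (StepPM k)
              (fun μ => decide ((φ μ = true ∧ μ ≠ ν) ∨ μ = c))
              (fun μ => decide (((fun μ => decide ((φ μ = true ∧ μ ≠ ν) ∨ μ = c)) μ = true
                ∧ μ ≠ c) ∨ μ = ν')) := by
            apply ih q.length (by simp at hlen; omega)
              (fun μ => decide ((φ μ = true ∧ μ ≠ ν) ∨ μ = c)) c ν' q rfl hcase
              (hpath.of_cons.of_cons)
            · intro μ hμ hμc hμν'
              have hμν : μ ≠ ν := fun hh => hνq (hh ▸ hμ)
              have hf : φ μ = false := by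
                apply hint μ _ hμν hμν'
                simp [SimpleGraph.Walk.support_cons, hμ]
              simp [hf, hμc]
            · exact hpar'
            · simp
            · simp [hν', Ne.symm hcase]
          have heq : (fun μ => decide (((fun μ => decide ((φ μ = true ∧ μ ≠ ν) ∨ μ = c)) μ = true
                ∧ μ ≠ c) ∨ μ = ν')) =
              (fun μ => decide ((φ μ = true ∧ μ ≠ ν) ∨ μ = ν')) := by
            funext μ
            simp only [decide_eq_true_iff, decide_eq_decide]
            constructor
            · rintro (⟨(⟨h, hh⟩ | h), hh₂⟩ | h)
              · exact Or.inl ⟨h, hh⟩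
              · exact absurd h hh₂
              · exact Or.inr h
            · rintro (⟨h, hh⟩ | h)
              · by_cases hμ : μ = c
                · rw [hμ, hφc] at h; exact absurd h (by simp)
                · exact Or.inl ⟨Or.inl ⟨h, hh⟩, hμ⟩
              · exact Or.inr h
          rw [heq] at hq
          exact hst.trans hq

/-- Chainswapping: if there is a simple path from `ν` to `ν'` in `G_V` whose
internal vertices do not satisfy `φ`, with `(-1)^{|ν|} = (-1)^{|ν'|}`, `ν ∈ sat(φ)` and
`ν' ∉ sat(φ)`, then the function `φ'` with `sat(φ') = (sat(φ) \ {ν}) ∪ {ν'}` satisfies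
`φ →±* φ'`. -/
theorem stmt8 (k : ℕ) (hk : 1 ≤ k) (φ φ' : Finset (Fin (k + 1)) → Bool)
    (ν ν' : Finset (Fin (k + 1))) (hne : ν ≠ ν')
    (p : (hypercube k).Walk ν ν') (hpath : p.IsPath)
    (hint : ∀ μ ∈ p.support, μ ≠ ν → μ ≠ ν' → φ μ = false)
    (hpar : ((-1 : ℤ) ^ ν.card = (-1 : ℤ) ^ ν'.card))
    (hν : φ ν = true) (hν' : φ ν' = false)
    (hφ' : ∀ μ, φ' μ = true ↔ ((φ μ = true ∧ μ ≠ ν) ∨ μ = ν')) :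
    Relation.ReflTransGen (StepPM k) φ φ' := by
  have h := stmt8_aux k p.length φ ν ν' p rfl hne hpath hint hpar hν hν'
  have heq : φ' = (fun μ => decide ((φ μ = true ∧ μ ≠ ν) ∨ μ = ν')) := by
    funext μ
    have h1 := hφ' μ
    by_cases h2 : (φ μ = true ∧ μ ≠ ν) ∨ μ = ν'
    · simp [h2, h1.mpr h2]
    · simp only [h2, decide_eq_false_iff_not] at *
      cases hc : φ' μ
      · simp
      · exact absurd (h1.mp hc) h2
  rw [heq]
  exact h
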